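/- For every real number x with x ≥ 5.60483·10^10, one has (4e/π)·√x·log(16x) ≤ (7x/1600)·(1/(e^γ·log(log x) + 3/log(log 6))) − (49/400)·√x. -/

import Mathlib

open Real Filter

set_option maxRecDepth 100000

private lemma logA (K : ℝ) (hK : 256 ≤ K) :
    1/(K+1) + 1/(2*(K+1)*(K+2)) ≤ Real.log (K+1) - Real.log K := by
  have hK0 : (0:ℝ) < K := by linarith
  have hK1 : (0:ℝ) < K - 1 := by linarith
  have hKp1 : (0:ℝ) < K + 1 := by linarith
  have hKp2 : (0:ℝ) < K + 2 := by linarith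
  have hx : |(-(1/K) : ℝ)| < 1 := by
    rw [abs_neg, abs_of_pos (by positivity), div_lt_one hK0]; linarith
  have h := Real.abs_log_sub_add_sum_range_le hx 3
  rw [abs_le] at h
  obtain ⟨h1, -⟩ := h
  have hxabs : |(-(1/K):ℝ)| = 1/K := by rw [abs_neg, abs_of_pos (by positivity)]
  rw [hxabs] at h1
  have hlog : Real.log (1 - -(1/K)) = Real.log (K+1) - Real.log K := by
    rw [show (1 - -(1/K) : ℝ) = (K+1)/K by field_simp; ring,
      Real.log_div (by positivity) (by positivity)]
  rw [Finset.sum_range_succ, Finset.sum_range_succ, Finset.sum_range_succ,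
    Finset.sum_range_zero, hlog] at h1
  norm_num at h1
  have key : 1/(K+1) + 1/(2*(K+1)*(K+2)) ≤
      -(-K⁻¹ + (K^2)⁻¹/2 + (-K⁻¹)^3/3) - (K^4)⁻¹/(1-K⁻¹) := by
    rw [← sub_nonneg]
    have e : (-(-K⁻¹ + (K^2)⁻¹/2 + (-K⁻¹)^3/3) - (K^4)⁻¹/(1-K⁻¹)) -
        (1/(K+1) + 1/(2*(K+1)*(K+2))) =
        (5*K^3 - 11*K^2 - 14*K - 16) / (6*K^3*(K-1)*(K+1)*(K+2)) := by
      have hne : (1 - K⁻¹) ≠ 0 := by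
        have e2 : 1 - K⁻¹ = (K-1)/K := by field_simp
        rw [e2]; positivity
      field_simp
      ring
    rw [e]
    apply div_nonneg
    · nlinarith [sq_nonneg K, sq_nonneg (K-3)]
    · positivity
  linarith

private lemma step_lemma (m : ℕ) (hm : 256 ≤ m) :
    Real.eulerMascheroniSeq' (m+1) - 1/(2*((m:ℝ)+1+1)) ≤
      Real.eulerMascheroniSeq' m - 1/(2*((m:ℝ)+1)) := by
  have hm0 : m ≠ 0 := by omega
  have hm1 : m + 1 ≠ 0 := by omega
  rw [Real.eulerMascheroniSeq', Real.eulerMascheroniSeq', if_neg hm0, if_neg hm1,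
    harmonic_succ]
  have hlog := logA (m : ℝ) (by exact_mod_cast hm)
  have hm0' : (0:ℝ) < (m:ℝ) := by exact_mod_cast Nat.pos_of_ne_zero hm0
  push_cast
  have htel : 1/(2*((m:ℝ)+1)*((m:ℝ)+2)) = 1/(2*((m:ℝ)+1)) - 1/(2*((m:ℝ)+1+1)) := by
    field_simp
    ring
  have hinv : ((m:ℝ)+1)⁻¹ = 1/((m:ℝ)+1) := (one_div _).symm
  rw [hinv] at *
  linarith [hlog, htel]

private lemma harmonic_256_le : (harmonic 256 : ℚ) ≤ 6124344963/10^9 := by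
  simp only [harmonic, Finset.sum_range_succ, Finset.sum_range_zero]
  norm_num

private lemma gamma_le : Real.eulerMascheroniConstant ≤ 0.577222 := by
  have hmono : ∀ m : ℕ, 256 ≤ m →
      Real.eulerMascheroniSeq' m - 1/(2*((m:ℝ)+1)) ≤
        Real.eulerMascheroniSeq' 256 - 1/514 := by
    intro m hm
    induction m with
    | zero => omega
    | succ n ih =>
      rcases Nat.lt_or_ge n 256 with h | h
      · have hn : n = 255 := by omega
        subst hn
        norm_num
      · refine le_trans ?_ (ih h)
        have := step_lemma n h
        push_cast
        linarith
  have h1 : Filter.Tendsto (fun m : ℕ => (1:ℝ)/(2*((m:ℝ)+1))) Filter.atTop (nhds 0) := by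
    have h2 := tendsto_one_div_add_atTop_nhds_zero_nat.const_mul (1/2 : ℝ)
    rw [mul_zero] at h2
    convert h2 using 2 with m
    field_simp
  have hlim : Filter.Tendsto (fun m : ℕ => Real.eulerMascheroniSeq' m - 1/(2*((m:ℝ)+1)))
      Filter.atTop (nhds Real.eulerMascheroniConstant) := by
    have := Real.tendsto_eulerMascheroniSeq'.sub h1
    simpa using this
  have hle := le_of_tendsto hlim (Filter.eventually_atTop.mpr ⟨256, hmono⟩)
  have hseq : Real.eulerMascheroniSeq' 256 = (harmonic 256 : ℝ) - Real.log 256 := by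
    rw [Real.eulerMascheroniSeq', if_neg (by norm_num)]
    norm_num
  have hH := (Rat.cast_le (K := ℝ)).mpr harmonic_256_le
  push_cast at hH
  have hlog256 : (5.5451774424 : ℝ) ≤ Real.log 256 := by
    have h256 : (256:ℝ) = 2^8 := by norm_num
    rw [h256, Real.log_pow]
    have := Real.log_two_gt_d9
    push_cast
    linarith
  rw [hseq] at hle
  have : (0.577222:ℝ) = 577222/10^6 := by norm_num
  rw [this]
  have : (5.5451774424:ℝ) = 55451774424/10^10 := by norm_num
  rw [this] at hlog256
  linarith

private lemma exp_ub (x : ℝ) (hx0 : 0 ≤ x) (hx1 : x ≤ 1) :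
    Real.exp x ≤ (∑ i ∈ Finset.range 14, x^i / (Nat.factorial i)) +
      x^14 * (15 / (Nat.factorial 14 * 14)) := by
  have h := Real.exp_bound (x := x) (by rwa [abs_of_nonneg hx0]) (n := 14) (by norm_num)
  rw [abs_of_nonneg hx0] at h
  have h2 := (abs_le.mp h).2
  norm_num at h2 ⊢
  linarith

private lemma E_bd : Real.exp Real.eulerMascheroniConstant ≤ 1.781084 := by
  have h1 : Real.exp Real.eulerMascheroniConstant ≤ Real.exp 0.577222 :=
    Real.exp_le_exp.mpr gamma_le
  have h2 := exp_ub 0.577222 (by norm_num) (by norm_num)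
  refine h1.trans (h2.trans ?_)
  simp only [Finset.sum_range_succ, Finset.sum_range_zero]
  norm_num [Nat.factorial]

private lemma log6_bd : (1.791759:ℝ) ≤ Real.log 6 := by
  rw [Real.le_log_iff_exp_le (by norm_num)]
  rw [show (1.791759:ℝ) = 0.8958795 + 0.8958795 by norm_num, Real.exp_add]
  have h2 := exp_ub 0.8958795 (by norm_num) (by norm_num)
  have hb : Real.exp 0.8958795 ≤ 2.4494892 := by
    refine h2.trans ?_
    simp only [Finset.sum_range_succ, Finset.sum_range_zero]
    norm_num [Nat.factorial]
  nlinarith [Real.exp_pos (0.8958795:ℝ)]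

private lemma loglog6_bd : (0.583197:ℝ) ≤ Real.log (Real.log 6) := by
  have h0 : (0:ℝ) < Real.log 6 := by linarith [log6_bd]
  rw [Real.le_log_iff_exp_le h0]
  have h2 := exp_ub 0.583197 (by norm_num) (by norm_num)
  have : Real.exp 0.583197 ≤ 1.791759 := by
    refine h2.trans ?_
    simp only [Finset.sum_range_succ, Finset.sum_range_zero]
    norm_num [Nat.factorial]
  linarith [log6_bd]

private lemma c3_bd : 3 / Real.log (Real.log 6) ≤ 5.1440594 := by
  have h := loglog6_bd
  have h0 : (0:ℝ) < 0.583197 := by norm_num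
  calc 3 / Real.log (Real.log 6) ≤ 3 / 0.583197 := by
        apply div_le_div_of_nonneg_left (by norm_num) h0 h
    _ ≤ 5.1440594 := by norm_num

private lemma logS_bd : Real.log 236745 ≤ 12.37474 := by
  rw [Real.log_le_iff_le_exp (by norm_num)]
  rw [show (12.37474:ℝ) = 12 + 0.37474 by norm_num, Real.exp_add]
  have h12 : (2.7182818283:ℝ)^12 ≤ Real.exp 12 := by
    rw [show (12:ℝ) = ((12:ℕ) : ℝ) * 1 by norm_num, Real.exp_nat_mul]
    exact pow_le_pow_left₀ (by norm_num) Real.exp_one_gt_d9.le 12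
  have h37 := Real.sum_le_exp_of_nonneg (x := 0.37474) (by norm_num) 14
  have hsum : (1.454613:ℝ) ≤ ∑ i ∈ Finset.range 14, (0.37474:ℝ)^i / (Nat.factorial i) := by
    simp only [Finset.sum_range_succ, Finset.sum_range_zero]
    norm_num [Nat.factorial]
  have h12' : (162754.7:ℝ) ≤ (2.7182818283:ℝ)^12 := by norm_num
  calc (236745:ℝ) ≤ 162754.7 * 1.454613 := by norm_num
    _ ≤ Real.exp 12 * Real.exp 0.37474 :=
        mul_le_mul (h12'.trans h12) (hsum.trans h37) (by norm_num) (Real.exp_pos 12).le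

private lemma log2L_bd : Real.log 24.74948 ≤ 3.2088055 := by
  rw [Real.log_le_iff_le_exp (by norm_num)]
  rw [show (3.2088055:ℝ) = 3 + 0.2088055 by norm_num, Real.exp_add]
  have h3 : (2.7182818283:ℝ)^3 ≤ Real.exp 3 := by
    rw [show (3:ℝ) = ((3:ℕ) : ℝ) * 1 by norm_num, Real.exp_nat_mul]
    exact pow_le_pow_left₀ (by norm_num) Real.exp_one_gt_d9.le 3
  have h20 := Real.sum_le_exp_of_nonneg (x := 0.2088055) (by norm_num) 14
  have hsum : (1.232205:ℝ) ≤ ∑ i ∈ Finset.range 14, (0.2088055:ℝ)^i / (Nat.factorial i) := by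
    simp only [Finset.sum_range_succ, Finset.sum_range_zero]
    norm_num [Nat.factorial]
  have h3' : (20.085536:ℝ) ≤ (2.7182818283:ℝ)^3 := by norm_num
  calc (24.74948:ℝ) ≤ 20.085536 * 1.232205 := by norm_num
    _ ≤ Real.exp 3 * Real.exp 0.2088055 :=
        mul_le_mul (h3'.trans h3) (hsum.trans h20) (by norm_num) (Real.exp_pos 3).le

private lemma C_bd : 4 * Real.exp 1 / Real.pi ≤ 3.4610247 := by
  have hpi := Real.pi_gt_d6
  have he := Real.exp_one_lt_d9
  rw [div_le_iff₀ (by linarith [Real.pi_pos])]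
  nlinarith


private lemma key_ineq (s : ℝ) (hs : 236745 ≤ s) :
    (3.4610247*(2.7725887232 + 2*Real.log s) + 49/400) *
      (1.781084*Real.log (2*Real.log s) + 5.1440594) ≤ 7*s/1600 := by
  have hs0 : (0:ℝ) < s := by linarith
  have hlogs1 : 1 ≤ Real.log s := by
    rw [Real.le_log_iff_exp_le hs0]
    linarith [Real.exp_one_lt_d9]
  have h2lp : (0:ℝ) < 2*Real.log s := by linarith
  have hl2nn : 0 ≤ Real.log (2*Real.log s) := Real.log_nonneg (by linarith)
  rcases le_or_gt s 207360000 with hcase | hcase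
  · -- moderate s
    set u : ℝ := s/236745 - 1 with hu
    have hu0 : 0 ≤ u := by
      have : (1:ℝ) ≤ s/236745 := by rw [le_div_iff₀ (by norm_num)]; linarith
      simp only [hu]; linarith
    have huU : u ≤ 207360000/236745 - 1 := by
      have : s/236745 ≤ 207360000/236745 := by
        apply div_le_div_of_nonneg_right hcase (by norm_num)
      simp only [hu]; linarith
    have hsu : s = 236745*(1+u) := by simp only [hu]; field_simp; ring
    have hlogs : Real.log s ≤ 12.37474 + u := by
      have h1 : Real.log s = Real.log 236745 + Real.log (s/236745) := by
        rw [← Real.log_mul (by norm_num) (by positivity)]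
        congr 1
        field_simp
      have h2 : Real.log (s/236745) ≤ s/236745 - 1 :=
        Real.log_le_sub_one_of_pos (by positivity)
      rw [h1]
      simp only [hu]
      linarith [logS_bd]
    have hlog2 : Real.log (2*Real.log s) ≤ 3.2088055 + u/12.37474 := by
      have hle : 2*Real.log s ≤ 24.74948*(1+u/12.37474) := by
        have : (24.74948:ℝ)*(1+u/12.37474) = 24.74948 + 2*u := by
          field_simp
          ring
        rw [this]; linarith
      calc Real.log (2*Real.log s) ≤ Real.log (24.74948*(1+u/12.37474)) :=
            Real.log_le_log h2lp hle
        _ = Real.log 24.74948 + Real.log (1+u/12.37474) :=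
            Real.log_mul (by norm_num) (by positivity)
        _ ≤ 3.2088055 + u/12.37474 := by
            have := Real.log_le_sub_one_of_pos (show (0:ℝ) < 1+u/12.37474 by positivity)
            linarith [log2L_bd]
    have hb1 : 3.4610247*(2.7725887232 + 2*Real.log s) + 49/400 ≤
        3.4610247*(2.7725887232 + 2*(12.37474+u)) + 49/400 := by linarith
    have hlog2' : Real.log (2*Real.log s) ≤ 3.2088055 + u * (50000/618737) := by
      rw [show u * (50000/618737) = u / 12.37474 by rw [div_eq_mul_inv]; norm_num; ring]
      exact hlog2
    have hb2 : 1.781084*Real.log (2*Real.log s) + 5.1440594 ≤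
        1.781084*(3.2088055 + u * (50000/618737)) + 5.1440594 := by linarith
    have hprod : (3.4610247*(2.7725887232 + 2*Real.log s) + 49/400) *
        (1.781084*Real.log (2*Real.log s) + 5.1440594) ≤
        (3.4610247*(2.7725887232 + 2*(12.37474+u)) + 49/400) *
        (1.781084*(3.2088055 + u * (50000/618737)) + 5.1440594) := by
      apply mul_le_mul hb1 hb2 (by positivity) (by positivity)
    refine hprod.trans ?_
    rw [hsu]
    nlinarith [mul_nonneg hu0 (sub_nonneg.mpr huU), hu0, huU]
  · -- large s
    set q : ℝ := Real.sqrt (Real.sqrt s) with hqdef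
    have hsqs : (14400:ℝ) ≤ Real.sqrt s := by
      rw [show (14400:ℝ) = Real.sqrt (14400^2) by rw [Real.sqrt_sq (by norm_num)]]
      exact Real.sqrt_le_sqrt (by nlinarith)
    have hq : (120:ℝ) ≤ q := by
      rw [hqdef, show (120:ℝ) = Real.sqrt (120^2) by rw [Real.sqrt_sq (by norm_num)]]
      exact Real.sqrt_le_sqrt (by nlinarith)
    have hq0 : (0:ℝ) < q := by linarith
    have hq4 : q^4 = s := by
      rw [hqdef]
      rw [show (Real.sqrt (Real.sqrt s))^4 = ((Real.sqrt (Real.sqrt s))^2)^2 by ring]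
      rw [Real.sq_sqrt (Real.sqrt_nonneg s), Real.sq_sqrt hs0.le]
    have hlogq : Real.log s = 4 * Real.log q := by
      rw [← hq4, Real.log_pow]
      push_cast
      ring
    have hlq : Real.log q ≤ q - 1 := Real.log_le_sub_one_of_pos hq0
    have hlog8 : Real.log 8 ≤ 2.0794415424 := by
      rw [show (8:ℝ) = 2^3 by norm_num, Real.log_pow]
      push_cast
      linarith [Real.log_two_lt_d9]
    have hlog2 : Real.log (2*Real.log s) ≤ 2.0794415424 + q := by
      have h8 : 2*Real.log s ≤ 8*q := by rw [hlogq]; linarith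
      calc Real.log (2*Real.log s) ≤ Real.log (8*q) := Real.log_le_log h2lp h8
        _ = Real.log 8 + Real.log q := Real.log_mul (by norm_num) hq0.ne'
        _ ≤ 2.0794415424 + q := by linarith
    have hb1 : 3.4610247*(2.7725887232 + 2*Real.log s) + 49/400 ≤
        3.4610247*(2.7725887232 + 8*q) + 49/400 := by
      rw [hlogq]; nlinarith
    have hb2 : 1.781084*Real.log (2*Real.log s) + 5.1440594 ≤
        1.781084*(2.0794415424 + q) + 5.1440594 := by linarith
    have hprod : (3.4610247*(2.7725887232 + 2*Real.log s) + 49/400) *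
        (1.781084*Real.log (2*Real.log s) + 5.1440594) ≤
        (3.4610247*(2.7725887232 + 8*q) + 49/400) *
        (1.781084*(2.0794415424 + q) + 5.1440594) := by
      apply mul_le_mul hb1 hb2 (by positivity) (by positivity)
    refine hprod.trans ?_
    rw [← hq4]
    nlinarith [hq, sq_nonneg (q - 120), mul_nonneg (sub_nonneg.mpr hq) (sq_nonneg (q-120)),
      mul_nonneg (mul_nonneg (sub_nonneg.mpr hq) (sub_nonneg.mpr hq)) (sub_nonneg.mpr hq),
      sq_nonneg q]


/-- For every real `x ≥ 5.60483·10^10`,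
`(4e/π)√x log(16x) ≤ (7x/1600)(1/(e^γ log log x + 3/log log 6)) - (49/400)√x`. -/
theorem sporadic_inequality (x : ℝ) (hx : 5.60483 * 10 ^ 10 ≤ x) :
    4 * Real.exp 1 / Real.pi * Real.sqrt x * Real.log (16 * x) ≤
      7 * x / 1600 *
        (1 / (Real.exp Real.eulerMascheroniConstant * Real.log (Real.log x) +
          3 / Real.log (Real.log 6))) -
      49 / 400 * Real.sqrt x := by
  have hx0 : (0:ℝ) < x := by linarith
  set s : ℝ := Real.sqrt x with hsdef
  have hS : (236745:ℝ) ≤ s := by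
    rw [hsdef, show (236745:ℝ) = Real.sqrt (236745^2) by rw [Real.sqrt_sq (by norm_num)]]
    exact Real.sqrt_le_sqrt (by nlinarith)
  have hs0 : (0:ℝ) < s := by linarith
  have hxs : s^2 = x := Real.sq_sqrt hx0.le
  have hlogx : Real.log x = 2 * Real.log s := by
    rw [← hxs, Real.log_pow]
    push_cast
    ring
  have hlogs1 : 1 ≤ Real.log s := by
    rw [Real.le_log_iff_exp_le hs0]
    linarith [Real.exp_one_lt_d9]
  have hloglogx : 0 ≤ Real.log (Real.log x) := by
    rw [hlogx]
    exact Real.log_nonneg (by linarith)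
  have hll6 : (0:ℝ) < Real.log (Real.log 6) := lt_of_lt_of_le (by norm_num) loglog6_bd
  have hD : (0:ℝ) < Real.exp Real.eulerMascheroniConstant * Real.log (Real.log x) +
      3 / Real.log (Real.log 6) := by
    have h1 : (0:ℝ) ≤ Real.exp Real.eulerMascheroniConstant * Real.log (Real.log x) :=
      mul_nonneg (Real.exp_pos _).le hloglogx
    have h2 : (0:ℝ) < 3 / Real.log (Real.log 6) := by positivity
    linarith
  -- bound log(16x)
  have hlog16x : Real.log (16*x) = Real.log 16 + Real.log x :=
    Real.log_mul (by norm_num) hx0.ne'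
  have hlog16 : Real.log 16 ≤ 2.7725887232 := by
    rw [show (16:ℝ) = 2^4 by norm_num, Real.log_pow]
    push_cast
    linarith [Real.log_two_lt_d9]
  have hlog16x_pos : 0 ≤ Real.log (16*x) := by
    apply Real.log_nonneg
    nlinarith
  -- main bound
  have hmain : (4 * Real.exp 1 / Real.pi * Real.log (16*x) + 49/400) *
      (Real.exp Real.eulerMascheroniConstant * Real.log (Real.log x) +
        3 / Real.log (Real.log 6)) ≤ 7*s/1600 := by
    have hC0 : (0:ℝ) ≤ 4 * Real.exp 1 / Real.pi := by positivity
    have hb1 : 4 * Real.exp 1 / Real.pi * Real.log (16*x) + 49/400 ≤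
        3.4610247*(2.7725887232 + 2*Real.log s) + 49/400 := by
      have h1 : Real.log (16*x) ≤ 2.7725887232 + 2*Real.log s := by
        rw [hlog16x, hlogx]; linarith
      have h2 : 4 * Real.exp 1 / Real.pi * Real.log (16*x) ≤
          3.4610247 * (2.7725887232 + 2*Real.log s) :=
        mul_le_mul C_bd h1 hlog16x_pos (by norm_num)
      linarith
    have hb2 : Real.exp Real.eulerMascheroniConstant * Real.log (Real.log x) +
        3 / Real.log (Real.log 6) ≤ 1.781084*Real.log (2*Real.log s) + 5.1440594 := by
      have h1 : Real.exp Real.eulerMascheroniConstant * Real.log (Real.log x) ≤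
          1.781084 * Real.log (2*Real.log s) := by
        rw [hlogx]
        exact mul_le_mul_of_nonneg_right E_bd (by rw [← hlogx]; exact hloglogx)
      linarith [c3_bd]
    calc (4 * Real.exp 1 / Real.pi * Real.log (16*x) + 49/400) *
        (Real.exp Real.eulerMascheroniConstant * Real.log (Real.log x) +
          3 / Real.log (Real.log 6)) ≤
        (3.4610247*(2.7725887232 + 2*Real.log s) + 49/400) *
        (1.781084*Real.log (2*Real.log s) + 5.1440594) := by
          apply mul_le_mul hb1 hb2 hD.le (by positivity)
      _ ≤ 7*s/1600 := key_ineq s hS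
  -- conclude
  have h1 : (4 * Real.exp 1 / Real.pi * Real.log (16*x) + 49/400) * s ≤
      7*x/1600 * (1 / (Real.exp Real.eulerMascheroniConstant * Real.log (Real.log x) +
        3 / Real.log (Real.log 6))) := by
    rw [mul_one_div, le_div_iff₀ hD]
    calc (4 * Real.exp 1 / Real.pi * Real.log (16*x) + 49/400) * s *
        (Real.exp Real.eulerMascheroniConstant * Real.log (Real.log x) +
          3 / Real.log (Real.log 6)) =
        ((4 * Real.exp 1 / Real.pi * Real.log (16*x) + 49/400) *
        (Real.exp Real.eulerMascheroniConstant * Real.log (Real.log x) +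
          3 / Real.log (Real.log 6))) * s := by ring
      _ ≤ (7*s/1600) * s := mul_le_mul_of_nonneg_right hmain hs0.le
      _ = 7*x/1600 := by rw [← hxs]; ring
  nlinarith [h1]
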